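/- Let q ≥ 5 be a prime power, let C = PRS(q+1,q−3), and assume that the covering radius of C equals 3. Fix a monic irreducible cubic polynomial p(x) ∈ F_q[x]. For (a,b,c) ∈ F_q³∖{(0,0,0)}, let w(a,b,c) = ((a+bα_1+cα_1²)/p(α_1), …, (a+bα_q+cα_q²)/p(α_q), 0) ∈ F_q^{q+1}. Then every word w(a,b,c) satisfies d(w(a,b,c), C) ∈ {2,3}; distinct triples (a,b,c) yield words lying in distinct cosets of C; and the number of triples (a,b,c) ∈ F_q³∖{(0,0,0)} with d(w(a,b,c), C) = 3 equals (q−1)(q²+q+2)/2. -/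

import Mathlib

open Polynomial

/-- The error distance from a word `u` to a code `C`. -/
noncomputable def errDist {ι F : Type*} [Fintype ι] [DecidableEq F]
    (u : ι → F) (C : Set (ι → F)) : ℕ :=
  sInf {d | ∃ c ∈ C, hammingDist u c = d}

/-- The covering radius of a code `C`. -/
noncomputable def covRad {ι F : Type*} [Fintype ι] [DecidableEq F]
    (C : Set (ι → F)) : ℕ :=
  sSup {d | ∃ u : ι → F, errDist u C = d}

/-- The projective Reed–Solomon code of length `q + 1` and dimension `k`. -/
def PRS (F : Type*) [Field F] (k : ℕ) : Set (Option F → F) :=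
  {w | ∃ f : F[X], f.degree < (k : ℕ) ∧ (∀ x : F, w (some x) = f.eval x) ∧
    w none = f.coeff (k - 1)}

/-- The word `((a+bα+cα²)/p(α))_{α ∈ F_q} ⌢ (0)` attached to a triple
`t = (a, b, c)` and a polynomial `p`. -/
noncomputable def wCubic {F : Type*} [Field F] (p : F[X]) (t : F × F × F) :
    Option F → F :=
  fun i => i.elim 0 (fun x => (t.1 + t.2.1 * x + t.2.2 * x ^ 2) / p.eval x)


open Finset

namespace Stmt16Aux

set_option linter.unusedSectionVars false

variable {F : Type*} [Field F] [Fintype F] [DecidableEq F]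

/-- numerator polynomial attached to a triple -/
noncomputable def Qpoly (t : F × F × F) : F[X] :=
  C t.1 + C t.2.1 * X + C t.2.2 * X ^ 2

noncomputable def tripleOf (r : F[X]) : F × F × F := (r.coeff 0, r.coeff 1, r.coeff 2)

lemma Qpoly_coeff (t : F × F × F) (n : ℕ) :
    (Qpoly t).coeff n =
      if n = 0 then t.1 else if n = 1 then t.2.1 else if n = 2 then t.2.2 else 0 := by
  rcases n with _ | _ | _ | n <;>
    simp [Qpoly, coeff_add, coeff_C, coeff_C_mul, coeff_X_pow, coeff_X]

lemma Qpoly_degree_lt (t : F × F × F) : (Qpoly t).degree < 3 := by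
  rw [show ((3 : WithBot ℕ) = ((3 : ℕ) : WithBot ℕ)) from rfl, degree_lt_iff_coeff_zero]
  intro m hm
  rw [Qpoly_coeff]
  have : ¬ m = 0 ∧ ¬ m = 1 ∧ ¬ m = 2 := by omega
  simp [this.1, this.2.1, this.2.2]

lemma Qpoly_natDegree_le (t : F × F × F) : (Qpoly t).natDegree ≤ 2 := by
  by_cases h : Qpoly t = 0
  · simp [h]
  · have := Qpoly_degree_lt t
    rw [degree_eq_natDegree h] at this
    exact_mod_cast Nat.lt_succ_iff.mp (by exact_mod_cast this)

lemma tripleOf_Qpoly (t : F × F × F) : tripleOf (Qpoly t) = t := by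
  simp [tripleOf, Qpoly_coeff]

lemma Qpoly_tripleOf {r : F[X]} (h : r.degree < 3) : Qpoly (tripleOf r) = r := by
  ext n
  rw [Qpoly_coeff]
  rcases n with _ | _ | _ | n
  · simp [tripleOf]
  · simp [tripleOf]
  · simp [tripleOf]
  · have : r.coeff (n + 3) = 0 := by
      apply coeff_eq_zero_of_degree_lt
      exact lt_of_lt_of_le h (by exact_mod_cast Nat.le_add_left 3 n)
    simp [this]

lemma Qpoly_eq_zero_iff (t : F × F × F) : Qpoly t = 0 ↔ t = (0, 0, 0) := by
  constructor
  · intro h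
    have h0 := congrArg (fun r : F[X] => r.coeff 0) h
    have h1 := congrArg (fun r : F[X] => r.coeff 1) h
    have h2 := congrArg (fun r : F[X] => r.coeff 2) h
    simp [Qpoly_coeff] at h0 h1 h2
    exact Prod.ext h0 (Prod.ext h1 h2)
  · rintro rfl
    simp [Qpoly]

lemma Qpoly_eval (t : F × F × F) (x : F) :
    (Qpoly t).eval x = t.1 + t.2.1 * x + t.2.2 * x ^ 2 := by
  simp [Qpoly]

/-- the root-set of a polynomial, as a Finset -/
noncomputable def Z (g : F[X]) : Finset F := univ.filter fun x => g.eval x = 0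

lemma prod_Z_dvd {g : F[X]} (R : Finset F) (hR : ∀ x ∈ R, g.eval x = 0) :
    (∏ x ∈ R, (X - C x)) ∣ g := by
  by_cases hg : g = 0
  · simp [hg]
  have hle : R.val ≤ g.roots := by
    rw [Multiset.le_iff_subset R.nodup]
    intro x hx
    rw [mem_roots hg]
    exact hR x hx
  have h1 : (R.val.map fun a => X - C a).prod ∣ (g.roots.map fun a => X - C a).prod :=
    Multiset.prod_dvd_prod_of_le (Multiset.map_le_map hle)
  calc (∏ x ∈ R, (X - C x)) = (R.val.map fun a => X - C a).prod := prod_eq_multiset_prod _ _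
    _ ∣ (g.roots.map fun a => X - C a).prod := h1
    _ ∣ g := prod_multiset_X_sub_C_dvd g

lemma Z_card_le {g : F[X]} (hg : g ≠ 0) : (Z g).card ≤ g.natDegree := by
  have h := prod_Z_dvd (Z g) (fun x hx => by simpa [Z] using (mem_filter.mp hx).2)
  have hd : (∏ x ∈ Z g, (X - C x)).natDegree = (Z g).card := by
    rw [natDegree_prod _ _ fun i _ => X_sub_C_ne_zero i]
    simp
  calc (Z g).card = _ := hd.symm
    _ ≤ g.natDegree := natDegree_le_of_dvd h hg

lemma monic_prodXsubC (R : Finset F) : (∏ x ∈ R, (X - C x)).Monic :=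
  monic_prod_of_monic _ _ fun i _ => monic_X_sub_C i

lemma natDegree_prodXsubC (R : Finset F) : (∏ x ∈ R, (X - C x)).natDegree = R.card := by
  rw [natDegree_prod _ _ fun i _ => X_sub_C_ne_zero i]; simp

lemma eq_C_mul_prod {g : F[X]} (hg : g ≠ 0) (hcard : g.natDegree ≤ (Z g).card) :
    ∃ l : F, l ≠ 0 ∧ g = C l * ∏ x ∈ Z g, (X - C x) := by
  obtain ⟨h, hh⟩ := prod_Z_dvd (Z g) (fun x hx => by simpa [Z] using (mem_filter.mp hx).2)
  have hhne : h ≠ 0 := by rintro rfl; simp at hh; exact hg hh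
  have hprodne : (∏ x ∈ Z g, (X - C x)) ≠ 0 := (monic_prodXsubC _).ne_zero
  have hdeg : g.natDegree = (Z g).card + h.natDegree := by
    have := congrArg natDegree hh
    rwa [natDegree_mul hprodne hhne, natDegree_prodXsubC] at this
  have h0 : h.natDegree = 0 := by omega
  obtain ⟨a, rfl⟩ := natDegree_eq_zero.mp h0
  refine ⟨a, ?_, hh.trans (mul_comm _ _)⟩
  rintro rfl
  simp at hh
  exact hg hh


/-! ### the polynomials `esp s` -/

noncomputable def esp (s : Finset F) : F[X] := ∏ x ∈ univ \ s, (X - C x)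

lemma esp_monic (s : Finset F) : (esp s).Monic := monic_prodXsubC _

lemma esp_natDegree (s : Finset F) (hs : s ⊆ univ) :
    (esp s).natDegree = Fintype.card F - s.card := by
  rw [esp, natDegree_prodXsubC, card_sdiff_of_subset hs, card_univ]

lemma esp_eval_eq_zero {s : Finset F} {x : F} (hx : x ∉ s) : (esp s).eval x = 0 := by
  rw [esp, eval_prod]
  exact Finset.prod_eq_zero (mem_sdiff.mpr ⟨mem_univ x, hx⟩) (by simp)

lemma esp_eval_ne_zero {s : Finset F} {x : F} (hx : x ∈ s) : (esp s).eval x ≠ 0 := by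
  rw [esp, eval_prod]
  refine Finset.prod_ne_zero_iff.mpr fun y hy => ?_
  have : y ≠ x := by rintro rfl; exact (mem_sdiff.mp hy).2 hx
  simp [sub_eq_zero]
  exact fun h => this h.symm

/-! ### facts about `p` -/

variable {p : F[X]}

lemma p_degree (hmonic : p.Monic) (hdeg : p.natDegree = 3) : p.degree = 3 := by
  rw [degree_eq_natDegree hmonic.ne_zero, hdeg]; rfl

lemma p_eval_ne (hirr : Irreducible p) (hdeg : p.natDegree = 3) (x : F) : p.eval x ≠ 0 := by
  intro h
  obtain ⟨g, hg⟩ := dvd_iff_isRoot.mpr h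
  rcases hirr.isUnit_or_isUnit hg with h1 | h2
  · exact not_isUnit_X_sub_C x h1
  · obtain ⟨u, hu, hcu⟩ := Polynomial.isUnit_iff.mp h2
    rw [← hcu] at hg
    have : p.natDegree = 1 := by
      rw [hg, natDegree_mul (X_sub_C_ne_zero x) (by simpa using hu.ne_zero)]
      simp
    omega

lemma p_prime (hirr : Irreducible p) : Prime p := hirr.prime

lemma not_dvd_C_mul_esp (hirr : Irreducible p) (hdeg : p.natDegree = 3)
    {l : F} (hl : l ≠ 0) (s : Finset F) : ¬ p ∣ C l * esp s := by
  intro h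
  rcases (p_prime hirr).dvd_mul.mp h with h1 | h2
  · have := natDegree_le_of_dvd h1 (by simpa using hl)
    simp [hdeg] at this
  · obtain ⟨x, -, hx⟩ := (p_prime hirr).exists_mem_finset_dvd h2
    have := natDegree_le_of_dvd hx (X_sub_C_ne_zero x)
    rw [hdeg, natDegree_X_sub_C] at this
    omega

lemma eq_zero_of_p_dvd (hmonic : p.Monic) (hdeg : p.natDegree = 3)
    {r : F[X]} (h : p ∣ r) (hr : r.degree < 3) : r = 0 :=
  eq_zero_of_dvd_of_degree_lt h (by rw [p_degree hmonic hdeg]; exact hr)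

/-! ### hamming distance over `Option F` -/

lemma hamming_option (u v : Option F → F) :
    hammingDist u v = (univ.filter fun x : F => u (some x) ≠ v (some x)).card
      + (if u none ≠ v none then 1 else 0) := by
  classical
  rw [hammingDist, card_filter, Fintype.sum_option, card_filter]
  ring


/-! ### codewords and distances -/

/-- the codeword attached to a polynomial `f` -/
noncomputable def cw (k : ℕ) (f : F[X]) : Option F → F :=
  fun i => i.elim (f.coeff (k - 1)) fun x => f.eval x

lemma cw_mem {k : ℕ} {f : F[X]} (hf : f.degree < (k : ℕ)) : cw k f ∈ PRS F k :=
  ⟨f, hf, fun _ => rfl, rfl⟩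

lemma mem_PRS_iff {k : ℕ} {c : Option F → F} :
    c ∈ PRS F k ↔ ∃ f : F[X], f.degree < (k : ℕ) ∧ c = cw k f := by
  constructor
  · rintro ⟨f, hdeg, hev, hnone⟩
    exact ⟨f, hdeg, funext fun i => by cases i <;> simp [cw, hnone, hev]⟩
  · rintro ⟨f, hdeg, rfl⟩
    exact cw_mem hdeg

lemma PRS_nonempty (k : ℕ) (hk : 0 < k) : (PRS F k).Nonempty :=
  ⟨cw k 0, cw_mem (by rw [degree_zero]; exact_mod_cast WithBot.bot_lt_coe k)⟩

lemma wCubic_some (p : F[X]) (t : F × F × F) (x : F) :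
    wCubic p t (some x) = (Qpoly t).eval x / p.eval x := by
  simp [wCubic, Qpoly_eval]

lemma wCubic_none (p : F[X]) (t : F × F × F) : wCubic p t none = 0 := rfl

lemma dist_formula (hirr : Irreducible p) (hdeg : p.natDegree = 3)
    (t : F × F × F) (k : ℕ) (f : F[X]) :
    hammingDist (wCubic p t) (cw k f) =
      (univ.filter fun x : F => (f * p - Qpoly t).eval x ≠ 0).card
        + (if f.coeff (k - 1) ≠ 0 then 1 else 0) := by
  rw [hamming_option]
  congr 1
  · congr 1
    apply Finset.filter_congr
    intro x _
    rw [wCubic_some]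
    simp only [cw, Option.elim]
    rw [not_iff_not]
    rw [div_eq_iff (p_eval_ne hirr hdeg x)]
    rw [eval_sub, eval_mul, sub_eq_zero, eq_comm]
  · simp only [wCubic_none, cw, Option.elim]
    by_cases h : f.coeff (k - 1) = 0
    · simp [h]
    · simp [h, Ne.symm h]


lemma g_ne_zero (hmonic : p.Monic) (hdeg : p.natDegree = 3)
    {t : F × F × F} (ht : t ≠ (0, 0, 0)) (f : F[X]) : f * p - Qpoly t ≠ 0 := by
  intro h
  have hfp : f * p = Qpoly t := sub_eq_zero.mp h
  rcases eq_or_ne f 0 with rfl | hf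
  · exact ht ((Qpoly_eq_zero_iff t).mp (by simpa using hfp.symm))
  · have h1 := congrArg natDegree hfp
    rw [natDegree_mul hf hmonic.ne_zero, hdeg] at h1
    have h2 := Qpoly_natDegree_le t
    omega

lemma natDegree_g (hmonic : p.Monic) (hdeg : p.natDegree = 3)
    {f : F[X]} (hf : f ≠ 0) (t : F × F × F) :
    (f * p - Qpoly t).natDegree = f.natDegree + 3 := by
  have hmul : (f * p).natDegree = f.natDegree + 3 := by
    rw [natDegree_mul hf hmonic.ne_zero, hdeg]
  have h1 : (- Qpoly t).natDegree < (f * p).natDegree := by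
    rw [natDegree_neg, hmul]
    have := Qpoly_natDegree_le t
    omega
  rw [sub_eq_neg_add, natDegree_add_eq_right_of_natDegree_lt h1, hmul]

lemma natDegree_f_le (hq : 5 ≤ Fintype.card F) {f : F[X]} (hf : f ≠ 0)
    (hfdeg : f.degree < ((Fintype.card F - 3 : ℕ) : ℕ)) :
    f.natDegree ≤ Fintype.card F - 4 := by
  have := (natDegree_lt_iff_degree_lt hf).mpr hfdeg
  omega

lemma natDegree_f_le' (hq : 5 ≤ Fintype.card F) {f : F[X]} (hf : f ≠ 0)
    (hfdeg : f.degree < ((Fintype.card F - 3 : ℕ) : ℕ))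
    (hc : f.coeff (Fintype.card F - 3 - 1) = 0) :
    f.natDegree ≤ Fintype.card F - 5 := by
  have h1 := natDegree_f_le hq hf hfdeg
  have h2 : f.natDegree ≠ Fintype.card F - 3 - 1 := by
    intro h
    exact hf (leadingCoeff_eq_zero.mp (by rw [leadingCoeff, h]; exact hc))
  omega

lemma card_split (g : F[X]) :
    (univ.filter fun x : F => g.eval x ≠ 0).card + (Z g).card = Fintype.card F := by
  rw [Z, add_comm, ← card_univ]
  exact card_filter_add_card_filter_not (fun x => g.eval x = 0)

lemma two_le_dist (hq : 5 ≤ Fintype.card F) (hmonic : p.Monic) (hirr : Irreducible p)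
    (hdeg : p.natDegree = 3) {t : F × F × F} (ht : t ≠ (0, 0, 0)) {f : F[X]}
    (hfdeg : f.degree < ((Fintype.card F - 3 : ℕ) : ℕ)) :
    2 ≤ hammingDist (wCubic p t) (cw (Fintype.card F - 3) f) := by
  have hgne := g_ne_zero hmonic hdeg ht f
  rw [dist_formula hirr hdeg]
  have hsplit := card_split (f * p - Qpoly t)
  simp only [ne_eq] at hsplit
  have hZle := Z_card_le hgne
  by_cases hc : f.coeff (Fintype.card F - 3 - 1) = 0
  · rcases eq_or_ne f 0 with rfl | hfne
    · have hgd : (0 * p - Qpoly t).natDegree ≤ 2 := by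
        rw [zero_mul, zero_sub, natDegree_neg]; exact Qpoly_natDegree_le t
      simp only [hc, ne_eq, not_true_eq_false, if_false]
      omega
    · have hfd := natDegree_f_le' hq hfne hfdeg hc
      have hgd : (f * p - Qpoly t).natDegree = f.natDegree + 3 :=
        natDegree_g hmonic hdeg hfne t
      simp only [hc, ne_eq, not_true_eq_false, if_false]
      omega
  · have hfne : f ≠ 0 := fun h => hc (by simp [h])
    have hfd := natDegree_f_le hq hfne hfdeg
    have hgd : (f * p - Qpoly t).natDegree = f.natDegree + 3 :=
      natDegree_g hmonic hdeg hfne t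
    simp only [hc, ne_eq, not_false_eq_true, if_true]
    omega


/-- the parametrized condition characterizing error distance 2 -/
def Phi (p : F[X]) (t : F × F × F) : Prop :=
  ∃ (l : F) (s : Finset F), l ≠ 0 ∧ (s.card = 1 ∨ s.card = 2) ∧
    p ∣ Qpoly t + C l * esp s

lemma errDist_le_two_of_Phi (hq : 5 ≤ Fintype.card F) (hmonic : p.Monic)
    (hirr : Irreducible p) (hdeg : p.natDegree = 3) {t : F × F × F}
    (hPhi : Phi p t) :
    errDist (wCubic p t) (PRS F (Fintype.card F - 3)) ≤ 2 := by
  obtain ⟨l, s, hl, hs, f, hf⟩ := hPhi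
  have hfp : f * p = Qpoly t + C l * esp s := by rw [hf, mul_comm]
  have hscard : s.card ≤ 2 := by rcases hs with h | h <;> omega
  have hscard1 : 1 ≤ s.card := by rcases hs with h | h <;> omega
  have hespE : (C l * esp s).natDegree = Fintype.card F - s.card := by
    rw [natDegree_C_mul hl, esp_natDegree s (subset_univ s)]
  have hQlt : (Qpoly t).natDegree < (C l * esp s).natDegree := by
    rw [hespE]; have := Qpoly_natDegree_le t; omega
  have hrhsdeg : (Qpoly t + C l * esp s).natDegree = Fintype.card F - s.card := by
    rw [natDegree_add_eq_right_of_natDegree_lt hQlt, hespE]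
  have hrhsne : Qpoly t + C l * esp s ≠ 0 := by
    intro h0; rw [h0, natDegree_zero] at hrhsdeg; omega
  have hfne : f ≠ 0 := by rintro rfl; rw [zero_mul] at hfp; exact hrhsne hfp.symm
  have hfdeg : f.natDegree = Fintype.card F - s.card - 3 := by
    have h1 := congrArg natDegree hfp
    rw [natDegree_mul hfne hmonic.ne_zero, hdeg, hrhsdeg] at h1
    omega
  have hfdegree : f.degree < ((Fintype.card F - 3 : ℕ) : ℕ) := by
    calc f.degree ≤ (f.natDegree : WithBot ℕ) := degree_le_natDegree
      _ < ((Fintype.card F - 3 : ℕ) : WithBot ℕ) := by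
          exact_mod_cast (by omega : f.natDegree < Fintype.card F - 3)
  calc errDist (wCubic p t) (PRS F (Fintype.card F - 3))
      ≤ hammingDist (wCubic p t) (cw (Fintype.card F - 3) f) :=
        Nat.sInf_le ⟨cw _ f, cw_mem hfdegree, rfl⟩
    _ ≤ 2 := by
        rw [dist_formula hirr hdeg]
        have hgsub : f * p - Qpoly t = C l * esp s := by rw [hfp]; ring
        have hsubset : (univ.filter fun x : F => (f * p - Qpoly t).eval x ≠ 0) ⊆ s := by
          intro x hx
          by_contra hxs
          have := (mem_filter.mp hx).2
          rw [hgsub] at this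
          exact this (by rw [eval_mul, esp_eval_eq_zero hxs, mul_zero])
        have hcard := card_le_card hsubset
        simp only [ne_eq] at hcard ⊢
        rcases hs with h1 | h2
        · have hite : (if ¬ f.coeff (Fintype.card F - 3 - 1) = 0 then 1 else 0) ≤ 1 := by
            split <;> omega
          omega
        · have hflt : f.natDegree < Fintype.card F - 3 - 1 := by omega
          have hc0 : f.coeff (Fintype.card F - 3 - 1) = 0 :=
            coeff_eq_zero_of_natDegree_lt hflt
          simp only [hc0, ne_eq, not_true_eq_false, if_false]
          omega

lemma Phi_of_dist_le_two (hq : 5 ≤ Fintype.card F) (hmonic : p.Monic)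
    (hirr : Irreducible p) (hdeg : p.natDegree = 3) {t : F × F × F}
    (ht : t ≠ (0, 0, 0)) {f : F[X]}
    (hfdeg : f.degree < ((Fintype.card F - 3 : ℕ) : ℕ))
    (hd : hammingDist (wCubic p t) (cw (Fintype.card F - 3) f) ≤ 2) :
    Phi p t := by
  have hgne := g_ne_zero hmonic hdeg ht f
  rw [dist_formula hirr hdeg] at hd
  have hsplit := card_split (f * p - Qpoly t)
  simp only [ne_eq] at hsplit hd
  have hZle := Z_card_le hgne
  have key : (f * p - Qpoly t).natDegree ≤ (Z (f * p - Qpoly t)).card ∧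
      (Z (f * p - Qpoly t)).card + 2 ≤ Fintype.card F + 1 := by
    by_cases hc : f.coeff (Fintype.card F - 3 - 1) = 0
    · rcases eq_or_ne f 0 with rfl | hfne
      · exfalso
        have hgd : (0 * p - Qpoly t).natDegree ≤ 2 := by
          rw [zero_mul, zero_sub, natDegree_neg]; exact Qpoly_natDegree_le t
        simp only [hc, not_true_eq_false, if_false] at hd
        omega
      · have hfd := natDegree_f_le' hq hfne hfdeg hc
        have hgd : (f * p - Qpoly t).natDegree = f.natDegree + 3 :=
          natDegree_g hmonic hdeg hfne t
        simp only [hc, not_true_eq_false, if_false] at hd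
        omega
    · have hfne : f ≠ 0 := fun h => hc (by simp [h])
      have hfd := natDegree_f_le hq hfne hfdeg
      have hfd2 : Fintype.card F - 3 - 1 ≤ f.natDegree := le_natDegree_of_ne_zero hc
      have hgd : (f * p - Qpoly t).natDegree = f.natDegree + 3 :=
        natDegree_g hmonic hdeg hfne t
      simp only [hc, not_false_eq_true, if_true] at hd
      omega
  obtain ⟨l, hl, hgeq⟩ := eq_C_mul_prod hgne key.1
  refine ⟨l, univ \ Z (f * p - Qpoly t), hl, ?_, ?_⟩
  · have h1 : (univ \ Z (f * p - Qpoly t)).card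
        = Fintype.card F - (Z (f * p - Qpoly t)).card := by
      rw [card_sdiff_of_subset (subset_univ _), card_univ]
    omega
  · have hZs : univ \ (univ \ Z (f * p - Qpoly t)) = Z (f * p - Qpoly t) := by
      rw [sdiff_sdiff_self_left, univ_inter]
    have hesp : esp (univ \ Z (f * p - Qpoly t)) = ∏ x ∈ Z (f * p - Qpoly t), (X - C x) := by
      rw [esp, hZs]
    refine ⟨f, ?_⟩
    rw [hesp, ← hgeq]
    ring


lemma errDist_set_nonempty (hq : 5 ≤ Fintype.card F) (u : Option F → F) :
    {d | ∃ c ∈ PRS F (Fintype.card F - 3), hammingDist u c = d}.Nonempty := by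
  obtain ⟨c, hc⟩ := PRS_nonempty (F := F) (Fintype.card F - 3) (by omega)
  exact ⟨hammingDist u c, c, hc, rfl⟩

lemma two_le_errDist (hq : 5 ≤ Fintype.card F) (hmonic : p.Monic)
    (hirr : Irreducible p) (hdeg : p.natDegree = 3) {t : F × F × F}
    (ht : t ≠ (0, 0, 0)) :
    2 ≤ errDist (wCubic p t) (PRS F (Fintype.card F - 3)) := by
  obtain ⟨c, hc, heq⟩ := Nat.sInf_mem (errDist_set_nonempty hq (wCubic p t))
  obtain ⟨f, hfdeg, rfl⟩ := mem_PRS_iff.mp hc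
  rw [errDist, ← heq]
  exact two_le_dist hq hmonic hirr hdeg ht hfdeg

lemma errDist_le_three (hcov : covRad (PRS F (Fintype.card F - 3)) = 3)
    (u : Option F → F) :
    errDist u (PRS F (Fintype.card F - 3)) ≤ 3 := by
  have hmem : errDist u (PRS F (Fintype.card F - 3)) ∈
      {d | ∃ v : Option F → F, errDist v (PRS F (Fintype.card F - 3)) = d} := ⟨u, rfl⟩
  have hbdd : BddAbove {d | ∃ v : Option F → F,
      errDist v (PRS F (Fintype.card F - 3)) = d} :=
    (Set.finite_range fun v : Option F → F =>
      errDist v (PRS F (Fintype.card F - 3))).bddAbove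
  calc errDist u (PRS F (Fintype.card F - 3)) ≤ _ := le_csSup hbdd hmem
    _ = 3 := hcov

lemma errDist_eq_two_iff (hq : 5 ≤ Fintype.card F) (hmonic : p.Monic)
    (hirr : Irreducible p) (hdeg : p.natDegree = 3) {t : F × F × F}
    (ht : t ≠ (0, 0, 0)) :
    errDist (wCubic p t) (PRS F (Fintype.card F - 3)) = 2 ↔ Phi p t := by
  constructor
  · intro h
    obtain ⟨c, hc, heq⟩ := Nat.sInf_mem (errDist_set_nonempty hq (wCubic p t))
    obtain ⟨f, hfdeg, rfl⟩ := mem_PRS_iff.mp hc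
    have : hammingDist (wCubic p t) (cw (Fintype.card F - 3) f) ≤ 2 := by
      rw [heq]; rw [errDist] at h; omega
    exact Phi_of_dist_le_two hq hmonic hirr hdeg ht hfdeg this
  · intro h
    exact le_antisymm (errDist_le_two_of_Phi hq hmonic hirr hdeg h)
      (two_le_errDist hq hmonic hirr hdeg ht)

/-! ### part 2 : distinct cosets -/

lemma coset_distinct (hq : 5 ≤ Fintype.card F) (hmonic : p.Monic)
    (hirr : Irreducible p) (hdeg : p.natDegree = 3)
    {t1 t2 : F × F × F} (hne : t1 ≠ t2) :
    wCubic p t1 - wCubic p t2 ∉ PRS F (Fintype.card F - 3) := by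
  rintro ⟨f, hfdeg, hev, -⟩
  set d : F × F × F := (t1.1 - t2.1, t1.2.1 - t2.2.1, t1.2.2 - t2.2.2) with hd
  have hdne : d ≠ (0, 0, 0) := by
    simp only [hd, Prod.mk.injEq, ne_eq, not_and, sub_eq_zero]
    intro h1 h2 h3
    exact hne (Prod.ext h1 (Prod.ext h2 h3))
  have hroots : ∀ x : F, (f * p - Qpoly d).eval x = 0 := by
    intro x
    have h1 := hev x
    have hpx := p_eval_ne hirr hdeg x
    have h2 : (wCubic p t1 - wCubic p t2) (some x)
        = ((Qpoly d).eval x) / p.eval x := by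
      simp only [Pi.sub_apply, wCubic_some, Qpoly_eval, hd]
      field_simp
      ring
    rw [h2] at h1
    rw [eval_sub, eval_mul, sub_eq_zero]
    field_simp at h1
    linear_combination -h1
  have hzero : f * p - Qpoly d = 0 := by
    by_contra hgne
    have h1 : (Z (f * p - Qpoly d)).card = Fintype.card F := by
      rw [Z, filter_true_of_mem (fun x _ => hroots x), card_univ]
    have h2 := Z_card_le hgne
    have h3 : (f * p - Qpoly d).natDegree ≤ Fintype.card F - 1 := by
      rcases eq_or_ne f 0 with rfl | hfne
      · rw [zero_mul, zero_sub, natDegree_neg]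
        have := Qpoly_natDegree_le d
        omega
      · rw [natDegree_g hmonic hdeg hfne d]
        have := natDegree_f_le hq hfne hfdeg
        omega
    omega
  exact g_ne_zero hmonic hdeg hdne f hzero


/-! ### the parametrization of distance-2 words -/

noncomputable def param (p : F[X]) (y : F × Finset F) : F × F × F :=
  tripleOf ((-(C y.1 * esp y.2)) %ₘ p)

lemma r_degree_lt (hmonic : p.Monic) (hdeg : p.natDegree = 3) (a : F[X]) :
    (a %ₘ p).degree < 3 := by
  have := degree_modByMonic_lt a hmonic
  rwa [p_degree hmonic hdeg] at this

lemma r_dvd (hmonic : p.Monic) (a : F[X]) : p ∣ a - a %ₘ p :=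
  ⟨a /ₘ p, by linear_combination -(modByMonic_add_div a p)⟩

lemma param_spec (hmonic : p.Monic) (hirr : Irreducible p) (hdeg : p.natDegree = 3)
    {l : F} (hl : l ≠ 0) (s : Finset F) :
    param p (l, s) ≠ (0, 0, 0) ∧ p ∣ Qpoly (param p (l, s)) + C l * esp s := by
  set a : F[X] := -(C l * esp s) with ha
  have hrdeg := r_degree_lt hmonic hdeg a
  have hQr : Qpoly (param p (l, s)) = a %ₘ p := Qpoly_tripleOf hrdeg
  have hdvd' : p ∣ a - a %ₘ p := r_dvd hmonic a
  constructor
  · intro h0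
    have : Qpoly (param p (l, s)) = 0 := (Qpoly_eq_zero_iff _).mpr h0
    rw [this] at hQr
    have hpd : p ∣ C l * esp s := by
      have h1 : p ∣ a := by
        have := hdvd'
        rwa [← hQr, sub_zero] at this
      rw [ha] at h1
      exact (dvd_neg).mp h1
    exact not_dvd_C_mul_esp hirr hdeg hl s hpd
  · rw [hQr]
    have h1 : a %ₘ p + C l * esp s = -(a - a %ₘ p) := by rw [ha]; ring
    rw [h1]
    exact dvd_neg.mpr hdvd'

lemma param_eq_of_Phi (hmonic : p.Monic) (hdeg : p.natDegree = 3)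
    {t : F × F × F} {l : F} (s : Finset F)
    (hdvd : p ∣ Qpoly t + C l * esp s) : param p (l, s) = t := by
  set a : F[X] := -(C l * esp s) with ha
  have hrdeg := r_degree_lt hmonic hdeg a
  have hdvd' : p ∣ a - a %ₘ p := r_dvd hmonic a
  have h1 : Qpoly t - a %ₘ p = (Qpoly t + C l * esp s) + (a - a %ₘ p) := by
    rw [ha]; ring
  have h2 : p ∣ Qpoly t - a %ₘ p := by rw [h1]; exact dvd_add hdvd hdvd'
  have h3 : Qpoly t - a %ₘ p = 0 :=
    eq_zero_of_p_dvd hmonic hdeg h2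
      (lt_of_le_of_lt (degree_sub_le _ _) (max_lt (Qpoly_degree_lt t) hrdeg))
  have h4 : a %ₘ p = Qpoly t := (sub_eq_zero.mp h3).symm
  rw [param, h4, tripleOf_Qpoly]

lemma param_inj (hq : 5 ≤ Fintype.card F) (hmonic : p.Monic) (hirr : Irreducible p)
    (hdeg : p.natDegree = 3) {l1 l2 : F} {s1 s2 : Finset F}
    (hl1 : l1 ≠ 0) (hl2 : l2 ≠ 0)
    (hc1 : s1.card = 1 ∨ s1.card = 2) (hc2 : s2.card = 1 ∨ s2.card = 2)
    (heq : param p (l1, s1) = param p (l2, s2)) : l1 = l2 ∧ s1 = s2 := by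
  set a1 : F[X] := -(C l1 * esp s1) with ha1
  set a2 : F[X] := -(C l2 * esp s2) with ha2
  have hr : a1 %ₘ p = a2 %ₘ p := by
    have e1 : Qpoly (param p (l1, s1)) = a1 %ₘ p :=
      Qpoly_tripleOf (r_degree_lt hmonic hdeg a1)
    have e2 : Qpoly (param p (l2, s2)) = a2 %ₘ p :=
      Qpoly_tripleOf (r_degree_lt hmonic hdeg a2)
    rw [← e1, ← e2, heq]
  have hdvd : p ∣ C l2 * esp s2 - C l1 * esp s1 := by
    have h1 := r_dvd hmonic a1
    have h2 := r_dvd hmonic a2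
    have h3 := dvd_sub h1 h2
    rw [hr] at h3
    have h4 : a1 - a2 %ₘ p - (a2 - a2 %ₘ p) = C l2 * esp s2 - C l1 * esp s1 := by
      rw [ha1, ha2]; ring
    rwa [h4] at h3
  have hdiff : C l2 * esp s2 - C l1 * esp s1 = 0 := by
    by_contra hdne
    obtain ⟨h, hh⟩ := hdvd
    have hhne : h ≠ 0 := by rintro rfl; rw [mul_zero] at hh; exact hdne hh
    have hdegdiff : (C l2 * esp s2 - C l1 * esp s1).natDegree = 3 + h.natDegree := by
      rw [hh, natDegree_mul hmonic.ne_zero hhne, hdeg]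
    have hdegle : (C l2 * esp s2 - C l1 * esp s1).natDegree ≤
        max (Fintype.card F - s2.card) (Fintype.card F - s1.card) := by
      calc (C l2 * esp s2 - C l1 * esp s1).natDegree
          ≤ max (C l2 * esp s2).natDegree (C l1 * esp s1).natDegree := natDegree_sub_le _ _
        _ ≤ _ := by
            rw [natDegree_C_mul hl2, natDegree_C_mul hl1,
              esp_natDegree s2 (subset_univ _), esp_natDegree s1 (subset_univ _)]
    have hroots : univ \ (s1 ∪ s2) ⊆ Z h := by
      intro x hx
      rw [mem_sdiff, mem_union] at hx
      push_neg at hx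
      have hx1 : x ∉ s1 := hx.2.1
      have hx2 : x ∉ s2 := hx.2.2
      have hev : (C l2 * esp s2 - C l1 * esp s1).eval x = 0 := by
        rw [eval_sub, eval_mul, eval_mul, esp_eval_eq_zero hx1, esp_eval_eq_zero hx2]
        ring
      rw [hh, eval_mul] at hev
      rcases mul_eq_zero.mp hev with h' | h'
      · exact absurd h' (p_eval_ne hirr hdeg x)
      · simpa [Z] using h'
    have hcardZ := Z_card_le hhne
    have hA : (univ \ (s1 ∪ s2)).card = Fintype.card F - (s1 ∪ s2).card := by
      rw [card_sdiff_of_subset (subset_univ _), card_univ]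
    have hB := card_le_card hroots
    have hC := card_union_le s1 s2
    omega
  have heq2 : C l1 * esp s1 = C l2 * esp s2 := by
    have := sub_eq_zero.mp hdiff
    exact this.symm
  have hcards : s1.card = s2.card := by
    have h1 := congrArg natDegree heq2
    rw [natDegree_C_mul hl1, natDegree_C_mul hl2,
      esp_natDegree s1 (subset_univ _), esp_natDegree s2 (subset_univ _)] at h1
    omega
  have hll : l1 = l2 := by
    have h1 := congrArg leadingCoeff heq2
    rwa [leadingCoeff_mul, leadingCoeff_mul, leadingCoeff_C, leadingCoeff_C,
      (esp_monic s1).leadingCoeff, (esp_monic s2).leadingCoeff, mul_one, mul_one] at h1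
  have hespeq : esp s1 = esp s2 := by
    apply mul_left_cancel₀ (show (C l1 : F[X]) ≠ 0 by simpa using hl1)
    rw [heq2, hll]
  refine ⟨hll, ?_⟩
  ext x
  constructor
  · intro hx
    by_contra hx2
    exact esp_eval_ne_zero hx (by rw [hespeq]; exact esp_eval_eq_zero hx2)
  · intro hx
    by_contra hx2
    exact esp_eval_ne_zero hx (by rw [← hespeq]; exact esp_eval_eq_zero hx2)


open scoped Classical in
lemma card_A2 (hq : 5 ≤ Fintype.card F) (hmonic : p.Monic) (hirr : Irreducible p)
    (hdeg : p.natDegree = 3) :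
    (univ.filter fun t : F × F × F => t ≠ (0, 0, 0) ∧
        errDist (wCubic p t) (PRS F (Fintype.card F - 3)) = 2).card
      = (Fintype.card F - 1) * (Fintype.card F + Fintype.card F * (Fintype.card F - 1) / 2) := by
  classical
  set dom : Finset (F × Finset F) :=
    (univ.filter fun l : F => l ≠ 0) ×ˢ (univ.powersetCard 1 ∪ univ.powersetCard 2) with hdom
  have hmemdom : ∀ y : F × Finset F, y ∈ dom ↔ y.1 ≠ 0 ∧ (y.2.card = 1 ∨ y.2.card = 2) := by
    intro y
    rw [hdom, mem_product, mem_filter, mem_union, mem_powersetCard, mem_powersetCard]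
    constructor
    · rintro ⟨⟨-, h1⟩, h2 | h2⟩
      · exact ⟨h1, Or.inl h2.2⟩
      · exact ⟨h1, Or.inr h2.2⟩
    · rintro ⟨h1, h2 | h2⟩
      · exact ⟨⟨mem_univ _, h1⟩, Or.inl ⟨subset_univ _, h2⟩⟩
      · exact ⟨⟨mem_univ _, h1⟩, Or.inr ⟨subset_univ _, h2⟩⟩
  have himage : (univ.filter fun t : F × F × F => t ≠ (0, 0, 0) ∧
      errDist (wCubic p t) (PRS F (Fintype.card F - 3)) = 2) = dom.image (param p) := by
    ext t
    rw [mem_filter, mem_image]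
    constructor
    · rintro ⟨-, ht, h2⟩
      obtain ⟨l, s, hl, hs, hdvd⟩ := (errDist_eq_two_iff hq hmonic hirr hdeg ht).mp h2
      exact ⟨(l, s), (hmemdom (l, s)).mpr ⟨hl, hs⟩, param_eq_of_Phi hmonic hdeg s hdvd⟩
    · rintro ⟨⟨l, s⟩, hy, rfl⟩
      obtain ⟨hl, hs⟩ := (hmemdom (l, s)).mp hy
      obtain ⟨hne, hdvd⟩ := param_spec hmonic hirr hdeg hl s
      refine ⟨mem_univ _, hne, ?_⟩
      exact (errDist_eq_two_iff hq hmonic hirr hdeg hne).mpr ⟨l, s, hl, hs, hdvd⟩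
  rw [himage]
  rw [Finset.card_image_of_injOn ?inj]
  case inj =>
    rintro ⟨l1, s1⟩ h1 ⟨l2, s2⟩ h2 heq
    obtain ⟨hl1, hc1⟩ := (hmemdom _).mp h1
    obtain ⟨hl2, hc2⟩ := (hmemdom _).mp h2
    obtain ⟨e1, e2⟩ := param_inj hq hmonic hirr hdeg hl1 hl2 hc1 hc2 heq
    exact Prod.ext e1 e2
  rw [hdom, card_product, card_union_of_disjoint, card_powersetCard, card_powersetCard,
    card_univ, Nat.choose_one_right, Nat.choose_two_right]
  · congr 1
    have : (univ.filter fun l : F => l ≠ 0) = univ.erase (0 : F) := by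
      ext x; simp [and_comm]
    rw [this, card_erase_of_mem (mem_univ _), card_univ]
  · intro u hu1 hu2 x hx
    exfalso
    have c1 := (mem_powersetCard.mp (hu1 hx)).2
    have c2 := (mem_powersetCard.mp (hu2 hx)).2
    omega


open scoped Classical in
lemma card_A3 (hq : 5 ≤ Fintype.card F)
    (hcov : covRad (PRS F (Fintype.card F - 3)) = 3)
    (hmonic : p.Monic) (hirr : Irreducible p) (hdeg : p.natDegree = 3) :
    Nat.card {t : F × F × F // t ≠ (0, 0, 0) ∧
        errDist (wCubic p t) (PRS F (Fintype.card F - 3)) = 3}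
      = (Fintype.card F - 1) * ((Fintype.card F) ^ 2 + Fintype.card F + 2) / 2 := by
  have hcard : Nat.card {t : F × F × F // t ≠ (0, 0, 0) ∧
      errDist (wCubic p t) (PRS F (Fintype.card F - 3)) = 3}
      = (univ.filter fun t : F × F × F => t ≠ (0, 0, 0) ∧
          errDist (wCubic p t) (PRS F (Fintype.card F - 3)) = 3).card := by
    rw [Nat.card_eq_fintype_card, Fintype.card_subtype]
  rw [hcard]
  have hu : (univ.filter fun t : F × F × F => t ≠ (0, 0, 0))
      = (univ.filter fun t : F × F × F => t ≠ (0, 0, 0) ∧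
          errDist (wCubic p t) (PRS F (Fintype.card F - 3)) = 2)
        ∪ (univ.filter fun t : F × F × F => t ≠ (0, 0, 0) ∧
          errDist (wCubic p t) (PRS F (Fintype.card F - 3)) = 3) := by
    ext t
    simp only [mem_filter, mem_union]
    constructor
    · rintro ⟨hu', ht⟩
      have h2 := two_le_errDist hq hmonic hirr hdeg ht
      have h3 := errDist_le_three hcov (wCubic p t)
      by_cases he : errDist (wCubic p t) (PRS F (Fintype.card F - 3)) = 2
      · exact Or.inl ⟨hu', ht, he⟩
      · exact Or.inr ⟨hu', ht, by omega⟩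
    · rintro (⟨hu', ht, -⟩ | ⟨hu', ht, -⟩) <;> exact ⟨hu', ht⟩
  have hdisj : Disjoint
      (univ.filter fun t : F × F × F => t ≠ (0, 0, 0) ∧
        errDist (wCubic p t) (PRS F (Fintype.card F - 3)) = 2)
      (univ.filter fun t : F × F × F => t ≠ (0, 0, 0) ∧
        errDist (wCubic p t) (PRS F (Fintype.card F - 3)) = 3) := by
    rw [disjoint_left]
    intro t h2 h3
    have a2 := (mem_filter.mp h2).2.2
    have a3 := (mem_filter.mp h3).2.2
    omega
  have hsum := congrArg Finset.card hu
  rw [card_union_of_disjoint hdisj] at hsum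
  have hA : (univ.filter fun t : F × F × F => t ≠ (0, 0, 0)).card
      = Fintype.card F * Fintype.card F * Fintype.card F - 1 := by
    have h1 : (univ.filter fun t : F × F × F => t ≠ (0, 0, 0))
        = univ.erase ((0, 0, 0) : F × F × F) := by
      ext t; simp [and_comm]
    rw [h1, card_erase_of_mem (mem_univ _), card_univ]
    have h2 : Fintype.card (F × F × F)
        = Fintype.card F * Fintype.card F * Fintype.card F := by
      simp [Fintype.card_prod]; ring
    rw [h2]
  have hA2 := card_A2 hq hmonic hirr hdeg
  rw [hA, hA2] at hsum
  set a := Fintype.card F * (Fintype.card F - 1) / 2 with hadef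
  set b := (Fintype.card F - 1) * (Fintype.card F ^ 2 + Fintype.card F + 2) / 2 with hbdef
  have h2a : a * 2 = Fintype.card F * (Fintype.card F - 1) := by
    rw [hadef]
    apply Nat.div_mul_cancel
    have h := Nat.even_mul_succ_self (Fintype.card F - 1)
    have hq1 : Fintype.card F - 1 + 1 = Fintype.card F := by omega
    rw [hq1] at h
    rw [mul_comm]
    exact h.two_dvd
  have h2b : b * 2 = (Fintype.card F - 1) * (Fintype.card F ^ 2 + Fintype.card F + 2) := by
    rw [hbdef]
    apply Nat.div_mul_cancel
    have h1 : Even (Fintype.card F ^ 2 + Fintype.card F + 2) := by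
      have h := Nat.even_mul_succ_self (Fintype.card F)
      have he : Fintype.card F * (Fintype.card F + 1) = Fintype.card F ^ 2 + Fintype.card F := by
        ring
      rw [he] at h
      exact h.add (by norm_num)
    exact (h1.mul_left _).two_dvd
  have h1 : 1 ≤ Fintype.card F := by omega
  have hcube : 1 ≤ Fintype.card F * Fintype.card F * Fintype.card F := by
    calc 1 = 1 * 1 * 1 := by norm_num
      _ ≤ Fintype.card F * Fintype.card F * Fintype.card F := by
          exact Nat.mul_le_mul (Nat.mul_le_mul h1 h1) h1
  have hkey2 : 2 * ((Fintype.card F - 1) * (Fintype.card F + a) + b)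
      = 2 * (Fintype.card F * Fintype.card F * Fintype.card F - 1) := by
    zify [h1, hcube]
    zify [h1] at h2a h2b
    linear_combination ((Fintype.card F : ℤ) - 1) * h2a + h2b
  have hkey : (Fintype.card F - 1) * (Fintype.card F + a) + b
      = Fintype.card F * Fintype.card F * Fintype.card F - 1 :=
    Nat.eq_of_mul_eq_mul_left (by norm_num) hkey2
  rw [← hkey] at hsum
  exact (Nat.add_left_cancel hsum).symm

end Stmt16Aux

/-- Let `C = PRS(q+1, q-3)` with covering radius `3`, and `p` a monic irreducible
cubic polynomial. Every word `w(a,b,c)` with `(a,b,c) ≠ (0,0,0)` has error distance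
`2` or `3` to `C`; distinct triples give distinct cosets of `C`; and exactly
`(q-1)(q²+q+2)/2` nonzero triples give deep holes (error distance `3`). -/
theorem stmt16 {F : Type*} [Field F] [Fintype F] [DecidableEq F]
    (hq : 5 ≤ Fintype.card F)
    (hcov : covRad (PRS F (Fintype.card F - 3)) = 3)
    (p : F[X]) (hmonic : p.Monic) (hirr : Irreducible p) (hdeg : p.natDegree = 3) :
    (∀ t : F × F × F, t ≠ (0, 0, 0) →
      errDist (wCubic p t) (PRS F (Fintype.card F - 3)) = 2 ∨
      errDist (wCubic p t) (PRS F (Fintype.card F - 3)) = 3) ∧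
    (∀ t1 t2 : F × F × F, t1 ≠ (0, 0, 0) → t2 ≠ (0, 0, 0) → t1 ≠ t2 →
      wCubic p t1 - wCubic p t2 ∉ PRS F (Fintype.card F - 3)) ∧
    Nat.card {t : F × F × F // t ≠ (0, 0, 0) ∧
        errDist (wCubic p t) (PRS F (Fintype.card F - 3)) = 3}
      = (Fintype.card F - 1) * ((Fintype.card F) ^ 2 + Fintype.card F + 2) / 2 := by
  refine ⟨?_, ?_, ?_⟩
  · intro t ht
    have h2 := Stmt16Aux.two_le_errDist hq hmonic hirr hdeg ht
    have h3 := Stmt16Aux.errDist_le_three hcov (wCubic p t)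
    omega
  · intro t1 t2 _ _ hne
    exact Stmt16Aux.coset_distinct hq hmonic hirr hdeg hne
  · exact Stmt16Aux.card_A3 hq hcov hmonic hirr hdeg
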